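/- Let G = Σ1 × ⋯ × Σr (r ≥ 2) with generators a_i^(k), b_i^(k) as above, and define c_i = a_i^(1)(b_i^(1))^{-1}, d = [b_1^(1), b_2^(1)], f_i^(k) = a_i^(1)(a_i^(k))^{-1}, g_i^(k) = b_i^(1)(b_i^(k))^{-1}. Then for all i, j ∈ {1,2} and k ∈ {2,…,r}: [(a_i^(1))^ε, g_j^(k)] equals [(f_i^(k))^ε, c_i^{-1}] if i = j; equals f_i^(k) c_j^{-1} (f_i^(k))^{-1} d^{2i-3} c_j if i ≠ j and ε = 1; and equals (f_i^(k))^{-1} c_j^{-1} d^{3-2i} f_i^(k) c_j if i ≠ j and ε = -1. -/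

import Mathlib

open FreeGroup
open scoped commutatorElement

def surfRels : Set (FreeGroup (Fin 4)) :=
  {⁅FreeGroup.of (0 : Fin 4), FreeGroup.of (1 : Fin 4)⁆ * ⁅FreeGroup.of (2 : Fin 4), FreeGroup.of (3 : Fin 4)⁆}

/-- The genus-2 surface group. -/
abbrev Surf := PresentedGroup surfRels

def a (i : Fin 2) : Surf := PresentedGroup.of ⟨i.val, by omega⟩
def b (i : Fin 2) : Surf := PresentedGroup.of ⟨i.val + 2, by omega⟩

abbrev M := Multiplicative (ℤ × ℤ)

def φgen : Fin 4 → M :=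
  fun n => Multiplicative.ofAdd (if n.val = 0 ∨ n.val = 2 then ((1 : ℤ), (0 : ℤ)) else ((0 : ℤ), (1 : ℤ)))

lemma φrels : ∀ r ∈ surfRels, FreeGroup.lift φgen r = 1 := by
  rintro r hr
  simp only [surfRels, Set.mem_singleton_iff] at hr
  subst hr
  have h1 : (FreeGroup.lift φgen) (⁅FreeGroup.of (0 : Fin 4), FreeGroup.of (1 : Fin 4)⁆ * ⁅FreeGroup.of (2 : Fin 4), FreeGroup.of (3 : Fin 4)⁆) = ⁅φgen 0, φgen 1⁆ * ⁅φgen 2, φgen 3⁆ := by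
    simp [commutatorElement_def]
  rw [h1, commutatorElement_eq_one_iff_mul_comm.mpr (mul_comm _ _),
    commutatorElement_eq_one_iff_mul_comm.mpr (mul_comm _ _), one_mul]

/-- The homomorphism Σ → ℤ² sending aᵢ, bᵢ to the i-th standard basis vector. -/
def φ1 : Surf →* M := PresentedGroup.toGroup φrels

/-- The direct product of r genus-2 surface groups. -/
abbrev GG (r : ℕ) := ∀ _ : Fin r, Surf

def A (r : ℕ) (i : Fin 2) (k : Fin r) : GG r := Pi.mulSingle k (a i)
def B (r : ℕ) (i : Fin 2) (k : Fin r) : GG r := Pi.mulSingle k (b i)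

/-- The homomorphism G = Σ₁ × ⋯ × Σr → ℤ² sending all aᵢ, bᵢ to eᵢ. -/
def Φ (r : ℕ) : GG r →* M := ∏ k : Fin r, φ1.comp (Pi.evalMonoidHom (fun _ => Surf) k)


lemma rel1 : ⁅a 0, a 1⁆ * ⁅b 0, b 1⁆ = (1 : Surf) := by
  have h : PresentedGroup.mk surfRels (⁅FreeGroup.of (0 : Fin 4), FreeGroup.of (1 : Fin 4)⁆ * ⁅FreeGroup.of (2 : Fin 4), FreeGroup.of (3 : Fin 4)⁆) = 1 := by
    refine (QuotientGroup.eq_one_iff _).mpr ?_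
    exact Subgroup.subset_normalClosure rfl
  simpa [commutatorElement_def, a, b, PresentedGroup.of] using h

lemma rel2 : b 0 * b 1 * (b 0)⁻¹ * (b 1)⁻¹ = a 1 * a 0 * (a 1)⁻¹ * (a 0)⁻¹ := by
  have h := mul_eq_one_iff_inv_eq.mp rel1
  simp only [commutatorElement_def] at h
  rw [← h]; group

/-- Values of the commutators `[(aᵢ⁽¹⁾)^ε, gⱼ⁽ᵏ⁾]` in `G = Σ₁ × ⋯ × Σr`, where
`cᵢ = aᵢ⁽¹⁾(bᵢ⁽¹⁾)⁻¹`, `d = [b₁⁽¹⁾, b₂⁽¹⁾]`, `fᵢ⁽ᵏ⁾ = aᵢ⁽¹⁾(aᵢ⁽ᵏ⁾)⁻¹`,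
`gᵢ⁽ᵏ⁾ = bᵢ⁽¹⁾(bᵢ⁽ᵏ⁾)⁻¹`. -/
theorem stmt8 (r : ℕ) (hr : 2 ≤ r) (i j : Fin 2) (k : Fin r) (hk : k ≠ ⟨0, by omega⟩)
    (ε : ℤ) (hε : ε = 1 ∨ ε = -1) :
    (letI o : Fin r := ⟨0, by omega⟩
     letI c : Fin 2 → GG r := fun i' => A r i' o * (B r i' o)⁻¹
     letI d : GG r := ⁅B r 0 o, B r 1 o⁆
     letI f : Fin 2 → GG r := fun i' => A r i' o * (A r i' k)⁻¹
     letI g : Fin 2 → GG r := fun i' => B r i' o * (B r i' k)⁻¹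
     ⁅(A r i o) ^ ε, g j⁆ =
       if i = j then ⁅(f i) ^ ε, (c i)⁻¹⁆
       else if ε = 1 then f i * (c j)⁻¹ * (f i)⁻¹ * (if i = 0 then d⁻¹ else d) * c j
       else (f i)⁻¹ * (c j)⁻¹ * (if i = 0 then d else d⁻¹) * f i * c j) := by
  dsimp only
  have hok : (⟨0, by omega⟩ : Fin r) ≠ k := fun h => hk h.symm
  rcases hε with hε | hε <;> subst hε <;> fin_cases i <;> fin_cases j <;>
  · repeat first | rw [if_pos rfl] | rw [if_neg (by decide)]
    funext l
    rcases eq_or_ne l ⟨0, by omega⟩ with hl | hl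
    · subst hl
      simp only [commutatorElement_def, zpow_one, zpow_neg_one, Pi.mul_apply, Pi.inv_apply,
        A, B, Pi.mulSingle_apply, if_pos rfl, if_neg hok, eq_self_iff_true, if_true,
        Fin.zero_eta, Fin.mk_one, Fin.isValue, reduceIte, inv_one, mul_one, one_mul]
      first
      | (group; done)
      | (rw [rel2]; group)
    · rcases eq_or_ne l k with hl2 | hl2
      · subst hl2
        simp only [commutatorElement_def, zpow_one, zpow_neg_one, Pi.mul_apply, Pi.inv_apply,
          A, B, Pi.mulSingle_apply, if_pos rfl, if_neg hl, eq_self_iff_true, if_true,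
          Fin.zero_eta, Fin.mk_one, Fin.isValue, reduceIte, inv_one, mul_one, one_mul]
        group
      · simp only [commutatorElement_def, zpow_one, zpow_neg_one, Pi.mul_apply, Pi.inv_apply,
          A, B, Pi.mulSingle_apply, if_neg hl, if_neg hl2,
          Fin.zero_eta, Fin.mk_one, Fin.isValue, reduceIte, inv_one, mul_one, one_mul]
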